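/- Let F ⊆ K[x_1,...,x_n] be a finite family with max deg(f_i) = t and d_reg(F) < t. Then there exists a family F' ⊆ V_{F,t} such that (F') = (F), no leading term of an element of F' divides the leading term of another (with respect to a fixed degree-compatible term order), and max deg(f') ≤ d_reg(F') ≤ d_reg(F) for all f' ∈ F'. -/

import Mathlib

open MvPolynomial

noncomputable section

/-- The total degree of a monomial exponent vector. -/
def mdeg {n : ℕ} (s : Fin n →₀ ℕ) : ℕ := s.sum fun _ e => e

/-- The top homogeneous component (homogeneous part of largest degree) of a polynomial. -/
def topPart {n : ℕ} {K : Type*} [CommSemiring K] (f : MvPolynomial (Fin n) K) :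
    MvPolynomial (Fin n) K :=
  homogeneousComponent f.totalDegree f

/-- `regAt F d` says that the degree-`d` part of the ideal generated by the top homogeneous
parts of the elements of `F` is all of `K[x₁,…,xₙ]_d`; the degree of regularity of `F` is the
least such `d`. -/
def regAt {n : ℕ} {K : Type*} [Field K] (F : Finset (MvPolynomial (Fin n) K)) (d : ℕ) : Prop :=
  ∀ p : MvPolynomial (Fin n) K, p.IsHomogeneous d →
    p ∈ Ideal.span (topPart '' (F : Set (MvPolynomial (Fin n) K)))

/-- `V F d` : the smallest `K`-linear subspace containing all elements of `F` of total degree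
at most `d`, and closed under multiplication by monomials as long as the degree stays `≤ d`. -/
def V {n : ℕ} {K : Type*} [Field K] (F : Finset (MvPolynomial (Fin n) K)) (d : ℕ) :
    Submodule K (MvPolynomial (Fin n) K) :=
  sInf {W | (∀ f ∈ F, f.totalDegree ≤ d → f ∈ W) ∧
    ∀ (s : Fin n →₀ ℕ), ∀ f ∈ W,
      (monomial s (1 : K) * f).totalDegree ≤ d → monomial s (1 : K) * f ∈ W}

/-- The leading monomial (exponent vector) of `f` with respect to a monomial order. -/
def lm {n : ℕ} {K : Type*} [Field K] (m : MonomialOrder (Fin n))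
    (f : MvPolynomial (Fin n) K) : Fin n →₀ ℕ :=
  m.toSyn.symm (f.support.sup fun s => m.toSyn s)

/-- A monomial order is degree-compatible if monomials of smaller degree are smaller. -/
def DegCompatible {n : ℕ} (m : MonomialOrder (Fin n)) : Prop :=
  ∀ s t : Fin n →₀ ℕ, mdeg s < mdeg t → m.toSyn s < m.toSyn t

/-- `G` is a Gröbner basis of `I` w.r.t. `m` : `G ⊆ I` and the leading monomial of every
nonzero element of `I` is divisible by the leading monomial of some nonzero element of `G`. -/
def IsGrobnerBasis {n : ℕ} {K : Type*} [Field K] (m : MonomialOrder (Fin n))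
    (I : Ideal (MvPolynomial (Fin n) K)) (G : Finset (MvPolynomial (Fin n) K)) : Prop :=
  (↑G : Set (MvPolynomial (Fin n) K)) ⊆ ↑I ∧
    ∀ f ∈ I, f ≠ 0 → ∃ g ∈ G, g ≠ 0 ∧ lm m g ≤ lm m f

/-- `G` is the reduced Gröbner basis: a Gröbner basis, monic, and no monomial occurring in an
element of `G` is divisible by the leading monomial of another element of `G`. -/
def IsReducedGB {n : ℕ} {K : Type*} [Field K] (m : MonomialOrder (Fin n))
    (I : Ideal (MvPolynomial (Fin n) K)) (G : Finset (MvPolynomial (Fin n) K)) : Prop :=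
  IsGrobnerBasis m I G ∧ (∀ g ∈ G, coeff (lm m g) g = 1) ∧
    ∀ g ∈ G, ∀ g' ∈ G, g ≠ g' → ∀ s ∈ g.support, ¬ lm m g' ≤ s

/-! ### Auxiliary lemmas -/

section Aux

set_option maxHeartbeats 1000000

lemma mdeg_degree {n : ℕ} (s : Fin n →₀ ℕ) : Finsupp.degree s = mdeg s := rfl

lemma mdeg_add {n : ℕ} {a b : Fin n →₀ ℕ} : mdeg (a + b) = mdeg a + mdeg b := by
  have h := Finsupp.degree_eq_weight_one (σ := Fin n) (R := ℕ)
  show Finsupp.degree _ = Finsupp.degree _ + Finsupp.degree _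
  rw [h, map_add]

lemma mdeg_eq_zero {n : ℕ} {a : Fin n →₀ ℕ} : mdeg a = 0 ↔ a = 0 :=
  Finsupp.degree_eq_zero_iff a

lemma mdeg_lt_of_lt {n : ℕ} {a b : Fin n →₀ ℕ} (h : a ≤ b) (hne : a ≠ b) :
    mdeg a < mdeg b := by
  have hb : a + (b - a) = b := add_tsub_cancel_of_le h
  have h0 : b - a ≠ 0 := by
    intro h0; apply hne; rw [← hb, h0, add_zero]
  have h1 : 0 < mdeg (b - a) := Nat.pos_of_ne_zero (by simpa using mdeg_eq_zero.not.mpr h0)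
  calc mdeg a < mdeg a + mdeg (b - a) := by omega
  _ = mdeg b := by rw [← mdeg_add, hb]

variable {n : ℕ} {K : Type*} [Field K] {m : MonomialOrder (Fin n)}

lemma toSyn_lm (f : MvPolynomial (Fin n) K) :
    m.toSyn (lm m f) = f.support.sup fun s => m.toSyn s := by
  simp [lm]

lemma lm_mem {f : MvPolynomial (Fin n) K} (hf : f ≠ 0) : lm m f ∈ f.support := by
  obtain ⟨b, hb, he⟩ := Finset.exists_mem_eq_sup f.support
    (MvPolynomial.support_nonempty.mpr hf) (fun s => m.toSyn s)
  have : lm m f = b := by rw [lm, he, AddEquiv.symm_apply_apply]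
  rwa [this]

lemma coeff_lm_ne_zero {f : MvPolynomial (Fin n) K} (hf : f ≠ 0) :
    MvPolynomial.coeff (lm m f) f ≠ 0 :=
  MvPolynomial.mem_support_iff.mp (lm_mem hf)

lemma le_toSyn_lm {f : MvPolynomial (Fin n) K} {b : Fin n →₀ ℕ} (hb : b ∈ f.support) :
    m.toSyn b ≤ m.toSyn (lm m f) := by
  rw [toSyn_lm]; exact Finset.le_sup (f := fun s => m.toSyn s) hb

lemma lm_eq_of {f : MvPolynomial (Fin n) K} {u : Fin n →₀ ℕ}
    (hu : MvPolynomial.coeff u f ≠ 0)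
    (h : ∀ b ∈ f.support, m.toSyn b ≤ m.toSyn u) : lm m f = u := by
  apply m.toSyn.injective
  rw [toSyn_lm]
  apply le_antisymm (Finset.sup_le h)
  exact Finset.le_sup (f := fun s => m.toSyn s) (MvPolynomial.mem_support_iff.mpr hu)

lemma mdeg_le_of_syn_le (hm : DegCompatible m) {a b : Fin n →₀ ℕ}
    (h : m.toSyn a ≤ m.toSyn b) : mdeg a ≤ mdeg b := by
  by_contra hc
  exact absurd h (not_le.mpr (hm _ _ (by omega)))

lemma mdeg_le_totalDegree {f : MvPolynomial (Fin n) K} {b : Fin n →₀ ℕ} (hb : b ∈ f.support) :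
    mdeg b ≤ f.totalDegree := MvPolynomial.le_totalDegree hb

lemma totalDegree_eq_mdeg_lm (hm : DegCompatible m) {f : MvPolynomial (Fin n) K} (hf : f ≠ 0) :
    f.totalDegree = mdeg (lm m f) := by
  apply le_antisymm
  · apply Finset.sup_le
    intro b hb
    exact mdeg_le_of_syn_le hm (le_toSyn_lm hb)
  · exact mdeg_le_totalDegree (lm_mem hf)

variable {F : Finset (MvPolynomial (Fin n) K)} {t : ℕ}

lemma mem_V_of_mem_F {f : MvPolynomial (Fin n) K} (hf : f ∈ F) (hd : f.totalDegree ≤ t) :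
    f ∈ V F t := by
  rw [V, Submodule.mem_sInf]
  exact fun W hW => hW.1 f hf hd

lemma V_mul_mem {f : MvPolynomial (Fin n) K} (hf : f ∈ V F t) (s : Fin n →₀ ℕ)
    (hd : (monomial s (1 : K) * f).totalDegree ≤ t) : monomial s (1 : K) * f ∈ V F t := by
  rw [V, Submodule.mem_sInf] at *
  exact fun W hW => hW.2 s f (hf W hW) hd

/-- The submodule of polynomials of bounded total degree. -/
def degLE (n : ℕ) (K : Type*) [Field K] (t : ℕ) : Submodule K (MvPolynomial (Fin n) K) where
  carrier := {f | f.totalDegree ≤ t}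
  add_mem' {a b} ha hb := le_trans (totalDegree_add a b) (max_le ha hb)
  zero_mem' := by simp
  smul_mem' c f hf := le_trans (totalDegree_smul_le c f) hf

lemma V_deg_le {f : MvPolynomial (Fin n) K} (hf : f ∈ V F t) : f.totalDegree ≤ t := by
  rw [V, Submodule.mem_sInf] at hf
  exact hf (degLE n K t) ⟨fun f _ hd => hd, fun s f _ hd => hd⟩

lemma V_le_span : V F t ≤
    (Ideal.span (F : Set (MvPolynomial (Fin n) K))).restrictScalars K := by
  apply sInf_le
  constructor
  · exact fun f hf _ => Ideal.subset_span hf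
  · exact fun s f hf _ => Ideal.mul_mem_left _ _ hf

lemma support_monomial_mul_subset (s : Fin n →₀ ℕ) (p : MvPolynomial (Fin n) K) :
    (monomial s (1 : K) * p).support ⊆ p.support.image (s + ·) := by
  intro b hb
  rw [mem_support_iff, coeff_monomial_mul'] at hb
  split_ifs at hb with h
  · rw [one_mul] at hb
    refine Finset.mem_image.mpr ⟨b - s, mem_support_iff.mpr hb, ?_⟩
    exact add_tsub_cancel_of_le h
  · exact absurd rfl hb

lemma hc_monomial_mul (e : ℕ) (s : Fin n →₀ ℕ) (g : MvPolynomial (Fin n) K)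
    (hs : mdeg s ≤ e) :
    homogeneousComponent e (monomial s (1 : K) * g) =
      monomial s 1 * homogeneousComponent (e - mdeg s) g := by
  ext b
  rw [coeff_homogeneousComponent, coeff_monomial_mul', coeff_monomial_mul']
  by_cases h : s ≤ b
  · rw [if_pos h, if_pos h, coeff_homogeneousComponent]
    have hb : mdeg s + mdeg (b - s) = mdeg b := by
      rw [← mdeg_add, add_tsub_cancel_of_le h]
    by_cases hd : Finsupp.degree b = e
    · rw [if_pos hd, if_pos]
      rw [mdeg_degree] at hd; rw [mdeg_degree]; omega
    · rw [if_neg hd, if_neg, mul_zero]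
      rw [mdeg_degree] at hd ⊢; omega
  · rw [if_neg h, if_neg h, ite_self]

lemma hc_mul_homog {e k : ℕ} (s : Fin n →₀ ℕ) {q : MvPolynomial (Fin n) K}
    (hq : q.IsHomogeneous k) :
    homogeneousComponent e (monomial s (1 : K) * q) =
      if mdeg s + k = e then monomial s 1 * q else 0 := by
  have hh : (monomial s (1:K) * q).IsHomogeneous (mdeg s + k) :=
    (isHomogeneous_monomial (1 : K) (mdeg_degree s)).mul hq
  rw [homogeneousComponent_of_mem (by exact hh : _ ∈ homogeneousSubmodule (Fin n) K (mdeg s + k))]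
  simp [eq_comm]

/-- Key construction: from a monomial in the ideal of top parts of a family inside `V F t`,
produce an element of `V F t` with that monomial as leading monomial and the monomial as
top homogeneous part. -/
lemma main_w (hm : DegCompatible m)
    (G : Finset (MvPolynomial (Fin n) K)) (hG : ∀ g ∈ G, g ∈ V F t)
    {e : ℕ} (he : e ≤ t) {u : Fin n →₀ ℕ} (hu : mdeg u = e)
    (hmem : (monomial u (1:K)) ∈ Ideal.span (topPart '' (G : Set (MvPolynomial (Fin n) K)))) :
    ∃ w : MvPolynomial (Fin n) K, w ∈ V F t ∧ w ≠ 0 ∧ lm m w = u ∧ w.totalDegree = e ∧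
      homogeneousComponent e w = monomial u 1 := by
  classical
  rw [Ideal.span, Submodule.mem_span_set] at hmem
  obtain ⟨c, hsupp, hsum⟩ := hmem
  have hgh : ∀ q ∈ c.support, ∃ g, g ∈ G ∧ topPart g = q := by
    intro q hq
    obtain ⟨g, hg, rfl⟩ := hsupp hq
    exact ⟨g, hg, rfl⟩
  set gh : MvPolynomial (Fin n) K → MvPolynomial (Fin n) K := fun q =>
    if h : ∃ g, g ∈ G ∧ topPart g = q then h.choose else 0 with hgh_def
  have ghspec : ∀ q ∈ c.support, gh q ∈ G ∧ topPart (gh q) = q := by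
    intro q hq
    have h := hgh q hq
    simp only [hgh_def, dif_pos h]
    exact h.choose_spec
  set w : MvPolynomial (Fin n) K :=
    ∑ q ∈ c.support, ∑ s ∈ (c q).support,
      if mdeg s + (gh q).totalDegree = e then ((c q).coeff s) • (monomial s (1:K) * gh q)
      else 0 with hw
  have hcw : homogeneousComponent e w = monomial u 1 := by
    have lhs : homogeneousComponent e w =
        ∑ q ∈ c.support, ∑ s ∈ (c q).support,
          if mdeg s + (gh q).totalDegree = e then ((c q).coeff s) • (monomial s (1:K) * q)
          else 0 := by
      rw [hw, map_sum]
      refine Finset.sum_congr rfl fun q hq => ?_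
      rw [map_sum]
      refine Finset.sum_congr rfl fun s hs => ?_
      split_ifs with h
      · rw [map_smul, hc_monomial_mul e s _ (by omega)]
        have : e - mdeg s = (gh q).totalDegree := by omega
        rw [this, show homogeneousComponent (gh q).totalDegree (gh q) = q from (ghspec q hq).2]
      · rw [map_zero]
    have rhs : monomial u (1:K) =
        ∑ q ∈ c.support, ∑ s ∈ (c q).support,
          if mdeg s + (gh q).totalDegree = e then ((c q).coeff s) • (monomial s (1:K) * q)
          else 0 := by
      have hmon : (monomial u (1:K)).IsHomogeneous e :=
        isHomogeneous_monomial _ (by rw [mdeg_degree]; exact hu)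
      have h1 : monomial u (1:K) = homogeneousComponent e (monomial u (1:K)) := by
        rw [homogeneousComponent_of_mem hmon]
        simp
      conv_lhs => rw [h1, ← hsum]
      rw [Finsupp.sum, map_sum]
      refine Finset.sum_congr rfl fun q hq => ?_
      have hq_homog : q.IsHomogeneous (gh q).totalDegree := by
        have h3 : (topPart (gh q)).IsHomogeneous (gh q).totalDegree :=
          homogeneousComponent_isHomogeneous _ _
        rwa [(ghspec q hq).2] at h3
      have expand : (c q) • q = ∑ s ∈ (c q).support, ((c q).coeff s) • (monomial s (1:K) * q) := by
        rw [smul_eq_mul]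
        conv_lhs => rw [(c q).as_sum, Finset.sum_mul]
        refine Finset.sum_congr rfl fun s hs => ?_
        rw [MvPolynomial.smul_eq_C_mul, ← mul_assoc, C_mul_monomial, mul_one]
      rw [expand, map_sum]
      refine Finset.sum_congr rfl fun s hs => ?_
      rw [map_smul, hc_mul_homog s hq_homog]
      split_ifs with h
      · rfl
      · rw [smul_zero]
    rw [lhs, ← rhs]
  have hdegw : w.totalDegree ≤ e := by
    rw [hw]
    refine totalDegree_finsetSum_le fun q hq => totalDegree_finsetSum_le fun s hs => ?_
    split_ifs with h
    · refine le_trans (totalDegree_smul_le _ _) (le_trans (totalDegree_mul _ _) ?_)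
      have h2 : (monomial s (1:K)).totalDegree = mdeg s := totalDegree_monomial _ one_ne_zero
      rw [h2]; omega
    · simp
  have hcoeffu : MvPolynomial.coeff u w = 1 := by
    have : MvPolynomial.coeff u (homogeneousComponent e w) = MvPolynomial.coeff u w := by
      rw [coeff_homogeneousComponent, if_pos (by rw [mdeg_degree]; exact hu)]
    rw [hcw] at this
    rw [← this, coeff_monomial, if_pos rfl]
  have hwne : w ≠ 0 := fun h0 => by simp [h0] at hcoeffu
  have hdeg_ge : e ≤ w.totalDegree := by
    by_contra hlt
    have := homogeneousComponent_eq_zero (n := e) (φ := w) (by omega)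
    rw [hcw] at this
    exact one_ne_zero ((monomial_eq_zero (s := u)).mp this)
  refine ⟨w, ?_, hwne, ?_, le_antisymm hdegw hdeg_ge, hcw⟩
  · rw [hw]
    refine Submodule.sum_mem _ fun q hq => Submodule.sum_mem _ fun s hs => ?_
    split_ifs with h
    · have h2 : (monomial s (1:K)).totalDegree = mdeg s := totalDegree_monomial _ one_ne_zero
      refine Submodule.smul_mem _ _ (V_mul_mem (hG _ (ghspec q hq).1) s ?_)
      refine le_trans (totalDegree_mul _ _) ?_
      rw [h2]; omega
    · exact Submodule.zero_mem _
  · refine lm_eq_of (show MvPolynomial.coeff u w ≠ 0 by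
      rw [hcoeffu]; exact (one_ne_zero : (1:K) ≠ 0)) fun b hb => ?_
    have hble : mdeg b ≤ e := le_trans (mdeg_le_totalDegree hb) hdegw
    rcases Nat.lt_or_ge (mdeg b) e with hlt | hge
    · exact le_of_lt (hm b u (by omega))
    · have hbe : mdeg b = e := by omega
      have : MvPolynomial.coeff b (homogeneousComponent e w) = MvPolynomial.coeff b w := by
        rw [coeff_homogeneousComponent, if_pos (by rw [mdeg_degree]; exact hbe)]
      rw [hcw] at this
      have hbne : MvPolynomial.coeff b w ≠ 0 := mem_support_iff.mp hb
      rw [← this, coeff_monomial] at hbne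
      by_cases hub : u = b
      · rw [hub]
      · rw [if_neg hub] at hbne; exact absurd rfl hbne

/-- Reduction by a family whose leading monomials divide those of all nonzero elements of
`V F t` : every element of `V F t` lies in the ideal generated by the family, and its top
part lies in the ideal generated by the top parts of the family. -/
lemma reduce (hm : DegCompatible m) {F' : Finset (MvPolynomial (Fin n) K)}
    (hF'V : ∀ g ∈ F', g ∈ V F t)
    (hcover : ∀ v, v ∈ V F t → v ≠ 0 → ∃ g ∈ F', g ≠ 0 ∧ lm m g ≤ lm m v) :
    ∀ v ∈ V F t, v ∈ Ideal.span (F' : Set (MvPolynomial (Fin n) K)) ∧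
      homogeneousComponent v.totalDegree v ∈
        Ideal.span (topPart '' (F' : Set (MvPolynomial (Fin n) K))) := by
  classical
  have H : ∀ κ : m.syn, ∀ v, v ∈ V F t → m.toSyn (lm m v) = κ →
      v ∈ Ideal.span (F' : Set (MvPolynomial (Fin n) K)) ∧
      homogeneousComponent v.totalDegree v ∈
        Ideal.span (topPart '' (F' : Set (MvPolynomial (Fin n) K))) := by
    intro κ
    induction κ using WellFoundedLT.induction with
    | _ κ IH =>
      intro v hv hκ
      subst hκ
      by_cases hv0 : v = 0
      · subst hv0
        constructor
        · exact Submodule.zero_mem _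
        · rw [map_zero]; exact Submodule.zero_mem _
      obtain ⟨g₁, hg₁F', hg₁0, hle⟩ := hcover v hv hv0
      set μ := lm m v with hμ
      set u₁ := lm m g₁ with hu₁
      set s : Fin n →₀ ℕ := μ - u₁ with hs
      have hsu : s + u₁ = μ := tsub_add_cancel_of_le hle
      set c : K := MvPolynomial.coeff μ v / MvPolynomial.coeff u₁ g₁ with hcdef
      set prod := monomial s (1:K) * g₁ with hprod
      set v' := v - c • prod with hv'def
      have hc0 : MvPolynomial.coeff u₁ g₁ ≠ 0 := coeff_lm_ne_zero hg₁0
      have hcoeffprod : MvPolynomial.coeff μ prod = MvPolynomial.coeff u₁ g₁ := by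
        rw [hprod, ← hsu, coeff_monomial_mul, one_mul]
      have hsupprod : ∀ b ∈ prod.support, m.toSyn b ≤ m.toSyn μ := by
        intro b hb
        obtain ⟨b', hb', rfl⟩ := Finset.mem_image.mp (support_monomial_mul_subset s g₁ hb)
        rw [← hsu, map_add, map_add]
        exact add_le_add le_rfl (le_toSyn_lm (m := m) hb')
      have hμdeg : mdeg μ = v.totalDegree := (totalDegree_eq_mdeg_lm hm hv0).symm
      have hdegprod2 : prod.totalDegree ≤ v.totalDegree := by
        rw [← hμdeg]
        exact Finset.sup_le fun b hb => mdeg_le_of_syn_le hm (hsupprod b hb)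
      have hdegprod : prod.totalDegree ≤ t := le_trans hdegprod2 (V_deg_le hv)
      have hprodV : prod ∈ V F t := V_mul_mem (hF'V _ hg₁F') s hdegprod
      have hv'V : v' ∈ V F t := Submodule.sub_mem _ hv (Submodule.smul_mem _ _ hprodV)
      have hcoeffμv' : MvPolynomial.coeff μ v' = 0 := by
        rw [hv'def, coeff_sub, coeff_smul, hcoeffprod, hcdef, smul_eq_mul,
          div_mul_cancel₀ _ hc0, sub_self]
      have hsuppv' : ∀ b ∈ v'.support, m.toSyn b ≤ m.toSyn μ ∧ b ≠ μ := by
        intro b hb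
        constructor
        · have : b ∈ v.support ∪ (c • prod).support := by
            apply Finset.mem_of_subset (MvPolynomial.support_sub _ _ _) hb
          rcases Finset.mem_union.mp this with h | h
          · exact le_toSyn_lm h
          · exact hsupprod b (Finset.mem_of_subset (Finsupp.support_smul) h)
        · intro hbμ
          rw [hbμ] at hb
          exact (MvPolynomial.mem_support_iff.mp hb) hcoeffμv'
      have hlt : v' ≠ 0 → m.toSyn (lm m v') < m.toSyn μ := by
        intro hv'0
        obtain ⟨h1, h2⟩ := hsuppv' _ (lm_mem hv'0)
        exact lt_of_le_of_ne h1 (fun he => h2 (m.toSyn.injective he))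
      have hvdecomp : v = v' + c • prod := by rw [hv'def]; ring
      have hprodspan : prod ∈ Ideal.span (F' : Set (MvPolynomial (Fin n) K)) :=
        Ideal.mul_mem_left _ _ (Ideal.subset_span hg₁F')
      have hsmulspan : c • prod ∈ Ideal.span (F' : Set (MvPolynomial (Fin n) K)) := by
        rw [MvPolynomial.smul_eq_C_mul]
        exact Ideal.mul_mem_left _ _ hprodspan
      have hdegg₁ : g₁.totalDegree = mdeg u₁ := totalDegree_eq_mdeg_lm hm hg₁0
      have hmdegsum : mdeg s + mdeg u₁ = mdeg μ := by rw [← mdeg_add, hsu]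
      have hhcprod : homogeneousComponent v.totalDegree prod ∈
          Ideal.span (topPart '' (F' : Set (MvPolynomial (Fin n) K))) := by
        rw [hprod, hc_monomial_mul _ _ _ (by omega)]
        have : v.totalDegree - mdeg s = g₁.totalDegree := by omega
        rw [this]
        exact Ideal.mul_mem_left _ _ (Ideal.subset_span ⟨g₁, hg₁F', rfl⟩)
      have hKsmul : ∀ (a : K) (p : MvPolynomial (Fin n) K)
          (J : Ideal (MvPolynomial (Fin n) K)), p ∈ J → a • p ∈ J := fun a p J hp => by
        rw [MvPolynomial.smul_eq_C_mul]; exact Ideal.mul_mem_left _ _ hp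
      have hsplit : homogeneousComponent v.totalDegree v =
          homogeneousComponent v.totalDegree v' + c • homogeneousComponent v.totalDegree prod := by
        have h9 : ∀ e : ℕ, homogeneousComponent e v =
            homogeneousComponent e v' + c • homogeneousComponent e prod := by
          intro e
          conv_lhs => rw [hvdecomp]
          rw [map_add, map_smul]
        exact h9 v.totalDegree
      by_cases hv'0 : v' = 0
      · constructor
        · rw [hvdecomp, hv'0, zero_add]; exact hsmulspan
        · rw [hsplit, hv'0, map_zero, zero_add]
          exact hKsmul _ _ _ hhcprod
      · obtain ⟨ih1, ih2⟩ := IH _ (hlt hv'0) v' hv'V rfl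
        constructor
        · rw [hvdecomp]
          exact Ideal.add_mem _ ih1 hsmulspan
        · rw [hsplit]
          refine Ideal.add_mem _ ?_ (hKsmul _ _ _ hhcprod)
          have hdegv' : v'.totalDegree ≤ v.totalDegree := by
            refine le_trans (MvPolynomial.totalDegree_sub _ _) ?_
            exact max_le le_rfl (le_trans (totalDegree_smul_le _ _) hdegprod2)
          rcases lt_or_eq_of_le hdegv' with hlt2 | heq
          · rw [homogeneousComponent_eq_zero _ _ hlt2]
            exact Submodule.zero_mem _
          · rw [← heq]; exact ih2
  exact fun v hv => H _ v hv rfl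

lemma exists_trunc {n : ℕ} {u : Fin n →₀ ℕ} :
    ∀ k, k ≤ mdeg u → ∃ u₂, u₂ ≤ u ∧ mdeg u₂ = k := by
  intro k
  induction k with
  | zero => exact fun _ => ⟨0, bot_le, mdeg_eq_zero.mpr rfl⟩
  | succ k ih =>
    intro hk
    obtain ⟨u₂, h2, h3⟩ := ih (by omega)
    have hne : u₂ ≠ u := fun he => by rw [he] at h3; omega
    obtain ⟨i, hi⟩ := Function.ne_iff.mp (fun he => hne (DFunLike.ext _ _ (congrFun he)))
    have hlt : u₂ i < u i := lt_of_le_of_ne (h2 i) hi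
    refine ⟨u₂ + Finsupp.single i 1, ?_, ?_⟩
    · intro j
      rcases eq_or_ne i j with rfl | hij
      · simpa using hlt
      · rw [Finsupp.add_apply, Finsupp.single_apply, if_neg hij, add_zero]
        exact h2 j
    · rw [mdeg_add, h3]
      have : mdeg (Finsupp.single i 1) = 1 := by
        show (Finsupp.single i 1).sum _ = 1
        rw [Finsupp.sum_single_index rfl]
      omega

lemma exists_minimal {n : ℕ} (L : Set (Fin n →₀ ℕ)) :
    ∀ N, ∀ u ∈ L, mdeg u ≤ N →
      ∃ u₁ ∈ L, u₁ ≤ u ∧ ∀ u' ∈ L, u' ≤ u₁ → u' = u₁ := by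
  intro N
  induction N with
  | zero =>
    intro u hu hN
    refine ⟨u, hu, le_rfl, fun u' hu' hle => ?_⟩
    by_contra hne
    have := mdeg_lt_of_lt hle hne
    omega
  | succ N ih =>
    intro u hu hN
    by_cases hmin : ∀ u' ∈ L, u' ≤ u → u' = u
    · exact ⟨u, hu, le_rfl, hmin⟩
    · push_neg at hmin
      obtain ⟨u', hu', hle, hne⟩ := hmin
      have hlt := mdeg_lt_of_lt hle hne
      obtain ⟨u₁, h1, h2, h3⟩ := ih u' hu' (by omega)
      exact ⟨u₁, h1, le_trans h2 hle, h3⟩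

end Aux

/-- The reduction step of Proposition 3.9: if `t = max deg fᵢ` and `d_reg(F) < t`, there is a
family `F' ⊆ V_{F,t}` with `(F') = (F)`, no leading term of an element of `F'` dividing the
leading term of another, and `max deg f' ≤ d_reg(F') ≤ d_reg(F)`. -/
theorem stmt15 {n : ℕ} {K : Type*} [Field K] (F : Finset (MvPolynomial (Fin n) K))
    (m : MonomialOrder (Fin n)) (hm : DegCompatible m)
    (d : ℕ) (hreg : IsLeast {e | regAt F e} d)
    (hdt : d < F.sup MvPolynomial.totalDegree) :
    ∃ F' : Finset (MvPolynomial (Fin n) K),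
      (∀ g ∈ F', g ∈ V F (F.sup MvPolynomial.totalDegree)) ∧
      Ideal.span (F' : Set (MvPolynomial (Fin n) K)) =
        Ideal.span (F : Set (MvPolynomial (Fin n) K)) ∧
      (∀ g ∈ F', ∀ g' ∈ F', g ≠ g' → ¬ lm m g' ≤ lm m g) ∧
      ∃ d' : ℕ, IsLeast {e | regAt F' e} d' ∧ (∀ g ∈ F', g.totalDegree ≤ d') ∧ d' ≤ d := by
  classical
  set t := F.sup MvPolynomial.totalDegree with ht
  have hregd : regAt F d := hreg.1
  have hFV : ∀ f ∈ F, f ∈ V F t := fun f hf => mem_V_of_mem_F hf (Finset.le_sup hf)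
  -- The set of leading monomials of nonzero elements of V F t
  set Lset : Set (Fin n →₀ ℕ) :=
    {u | ∃ v, v ∈ V F t ∧ v ≠ 0 ∧ lm m v = u} with hLset
  have hLdeg : ∀ u ∈ Lset, mdeg u ≤ t := by
    rintro u ⟨v, hv, hv0, rfl⟩
    rw [← totalDegree_eq_mdeg_lm hm hv0]
    exact V_deg_le hv
  -- minimal elements
  set Lmin : Set (Fin n →₀ ℕ) :=
    {u | u ∈ Lset ∧ ∀ u' ∈ Lset, u' ≤ u → u' = u} with hLmin
  have hLminfin : Lmin.Finite := by
    refine Set.Finite.subset (Finsupp.finite_of_degree_le (σ := Fin n) t) ?_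
    intro u hu
    rw [Set.mem_setOf_eq, mdeg_degree]
    exact hLdeg u hu.1
  -- choice of representatives
  set vfun : (Fin n →₀ ℕ) → MvPolynomial (Fin n) K := fun u =>
    if h : ∃ v, v ∈ V F t ∧ v ≠ 0 ∧ lm m v = u then h.choose else 0 with hvfun
  have vspec : ∀ u ∈ Lset, vfun u ∈ V F t ∧ vfun u ≠ 0 ∧ lm m (vfun u) = u := by
    intro u hu
    have h : ∃ v, v ∈ V F t ∧ v ≠ 0 ∧ lm m v = u := hu
    simp only [hvfun, dif_pos h]
    exact h.choose_spec
  set F' : Finset (MvPolynomial (Fin n) K) := (hLminfin.image vfun).toFinset with hF'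
  have hmemF' : ∀ g, g ∈ F' ↔ ∃ u ∈ Lmin, vfun u = g := by
    intro g
    rw [hF', Set.Finite.mem_toFinset]
    exact Set.mem_image _ _ _
  have hF'V : ∀ g ∈ F', g ∈ V F t := by
    intro g hg
    obtain ⟨u, hu, rfl⟩ := (hmemF' g).mp hg
    exact (vspec u hu.1).1
  -- every monomial of degree d is a leading monomial of an element of V F t
  have hLd : ∀ u : Fin n →₀ ℕ, mdeg u = d → u ∈ Lset := by
    intro u hu
    have hmem : (monomial u (1:K)) ∈
        Ideal.span (topPart '' (F : Set (MvPolynomial (Fin n) K))) :=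
      hregd _ (isHomogeneous_monomial _ (by rw [mdeg_degree]; exact hu))
    obtain ⟨w, hwV, hw0, hwlm, -, -⟩ := main_w hm F hFV (le_of_lt hdt) hu hmem
    exact ⟨w, hwV, hw0, hwlm⟩
  -- all minimal leading monomials have degree at most d
  have hLmindeg : ∀ u ∈ Lmin, mdeg u ≤ d := by
    rintro u ⟨huL, humin⟩
    by_contra hgt
    obtain ⟨u₂, hle, hd2⟩ := exists_trunc (u := u) d (by omega)
    have hu₂L : u₂ ∈ Lset := hLd u₂ hd2
    have := humin u₂ hu₂L hle
    rw [this] at hd2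
    omega
  -- the covering property
  have hcover : ∀ v, v ∈ V F t → v ≠ 0 → ∃ g ∈ F', g ≠ 0 ∧ lm m g ≤ lm m v := by
    intro v hv hv0
    have hvL : lm m v ∈ Lset := ⟨v, hv, hv0, rfl⟩
    obtain ⟨u₁, h1, h2, h3⟩ := exists_minimal Lset (mdeg (lm m v)) (lm m v) hvL le_rfl
    have hu₁min : u₁ ∈ Lmin := ⟨h1, h3⟩
    refine ⟨vfun u₁, (hmemF' _).mpr ⟨u₁, hu₁min, rfl⟩, (vspec u₁ h1).2.1, ?_⟩
    rw [(vspec u₁ h1).2.2]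
    exact h2
  have hreduce := reduce hm hF'V hcover
  -- span equality
  have hspan : Ideal.span (F' : Set (MvPolynomial (Fin n) K)) =
      Ideal.span (F : Set (MvPolynomial (Fin n) K)) := by
    apply le_antisymm
    · rw [Ideal.span_le]
      intro g hg
      exact V_le_span (hF'V g hg)
    · rw [Ideal.span_le]
      intro f hf
      exact (hreduce f (hFV f hf)).1
  -- regAt F' d holds
  have hFact1 : regAt F' d := by
    intro p hp
    have hrep : p = ∑ b ∈ p.support, monomial b (MvPolynomial.coeff b p) := p.as_sum
    rw [hrep]
    refine Submodule.sum_mem _ fun b hb => ?_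
    have hbd : mdeg b = d := by
      rw [← mdeg_degree, Finsupp.degree_eq_weight_one]
      exact hp (mem_support_iff.mp hb)
    have hmem : (monomial b (1:K)) ∈
        Ideal.span (topPart '' (F : Set (MvPolynomial (Fin n) K))) :=
      hregd _ (isHomogeneous_monomial _ (by rw [mdeg_degree]; exact hbd))
    obtain ⟨w, hwV, hw0, hwlm, hwdeg, hwhc⟩ := main_w hm F hFV (le_of_lt hdt) hbd hmem
    have hw := (hreduce w hwV).2
    rw [hwdeg, hwhc] at hw
    have : monomial b (MvPolynomial.coeff b p) = MvPolynomial.coeff b p • monomial b (1:K) := by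
      rw [MvPolynomial.smul_eq_C_mul, C_mul_monomial, mul_one]
    rw [this, MvPolynomial.smul_eq_C_mul]
    exact Ideal.mul_mem_left _ _ hw
  -- the degree of regularity of F'
  have hne : ∃ e, regAt F' e := ⟨d, hFact1⟩
  set d' := Nat.find hne with hd'
  have hd'le : d' ≤ d := Nat.find_min' hne hFact1
  have hd'reg : regAt F' d' := Nat.find_spec hne
  refine ⟨F', hF'V, hspan, ?_, d', ⟨hd'reg, fun e he => Nat.find_min' hne he⟩, ?_, hd'le⟩
  · -- no leading monomial divides another
    intro g hg g' hg' hne'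
    obtain ⟨u, hu, rfl⟩ := (hmemF' g).mp hg
    obtain ⟨u', hu', rfl⟩ := (hmemF' g').mp hg'
    rw [(vspec u hu.1).2.2, (vspec u' hu'.1).2.2]
    intro hle
    have := hu.2 u' hu'.1 hle
    exact hne' (by rw [this])
  · -- all degrees at most d'
    intro g hg
    obtain ⟨u, hu, rfl⟩ := (hmemF' g).mp hg
    rw [totalDegree_eq_mdeg_lm hm (vspec u hu.1).2.1, (vspec u hu.1).2.2]
    by_contra hgt
    push_neg at hgt
    obtain ⟨u₂, hle, hd2⟩ := exists_trunc d' (le_of_lt hgt)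
    have hmem : (monomial u₂ (1:K)) ∈
        Ideal.span (topPart '' (F' : Set (MvPolynomial (Fin n) K))) :=
      hd'reg _ (isHomogeneous_monomial _ (by rw [mdeg_degree]; exact hd2))
    have hd't : d' ≤ t := by omega
    obtain ⟨w, hwV, hw0, hwlm, -, -⟩ := main_w hm F' hF'V hd't hd2 hmem
    have hu₂L : u₂ ∈ Lset := ⟨w, hwV, hw0, hwlm⟩
    have := hu.2 u₂ hu₂L hle
    rw [this] at hd2
    omega
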